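/- Stability condition for the Deep-ESN (Theorem 2): fix K ≥ 1, reservoir sizes N⁽¹⁾, …, N⁽ᴷ⁾, encoder sizes M⁽¹⁾, …, M⁽ᴷ⁻¹⁾, and input dimension D. Let W^{res(i)} be an N⁽ⁱ⁾×N⁽ⁱ⁾ real matrix for each i = 1, …, K, let W^{in(1)} be N⁽¹⁾×D, let W^{in(i)} be N⁽ⁱ⁾×M⁽ⁱ⁻¹⁾ for i = 2, …, K, and let W^{enc(j)} be M⁽ʲ⁾×N⁽ʲ⁾ for j = 1, …, K−1 (all with finite, hence bounded, operator norms). Let u : ℕ → ℝ^D be any input sequence. Suppose two families of state sequences x⁽ⁱ⁾, x̃⁽ⁱ⁾ : ℕ → ℝ^{N⁽ⁱ⁾} both satisfy the Deep-ESN recursion with linear encoders: x⁽¹⁾(t+1) = tanh.(W^{res(1)} x⁽¹⁾(t) + W^{in(1)} u(t+1)), and for i = 2, …, K, x⁽ⁱ⁾(t+1) = tanh.(W^{res(i)} x⁽ⁱ⁾(t) + W^{in(i)} W^{enc(i−1)} x⁽ⁱ⁻¹⁾(t+1)) (and likewise for x̃ with the same u). If the largest singular value of W^{res(i)} is strictly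 less than 1 for every i = 1, …, K, then for every i = 1, …, K, ‖x⁽ⁱ⁾(t) − x̃⁽ⁱ⁾(t)‖₂ → 0 as t → ∞. -/

import Mathlib

open Filter Topology

/-- Componentwise hyperbolic tangent on Euclidean space. -/
noncomputable def tanhVec {n : ℕ} (v : EuclideanSpace ℝ (Fin n)) : EuclideanSpace ℝ (Fin n) :=
  WithLp.toLp 2 (fun i => Real.tanh (v i))

/-- The action `x ↦ W x` of a matrix on Euclidean space (equal to `Matrix.mulVec`). -/
noncomputable def mulVecE {m n : ℕ} (W : Matrix (Fin m) (Fin n) ℝ)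
    (x : EuclideanSpace ℝ (Fin n)) : EuclideanSpace ℝ (Fin m) :=
  Matrix.toEuclideanLin W x

/-- The ℓ²-operator norm of a matrix (its largest singular value). -/
noncomputable def opNorm {m n : ℕ} (W : Matrix (Fin m) (Fin n) ℝ) : ℝ :=
  ‖LinearMap.toContinuousLinearMap (Matrix.toEuclideanLin W)‖

lemma hasDerivAt_tanh' (x : ℝ) :
    HasDerivAt Real.tanh (1 / Real.cosh x ^ 2) x := by
  have h := (Real.hasDerivAt_sinh x).div (Real.hasDerivAt_cosh x) (Real.cosh_pos x).ne'
  have heq : (Real.cosh x * Real.cosh x - Real.sinh x * Real.sinh x) / Real.cosh x ^ 2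
      = 1 / Real.cosh x ^ 2 := by
    rw [← sq, ← sq, Real.cosh_sq_sub_sinh_sq]
  rw [heq] at h
  exact h.congr_of_eventuallyEq (Filter.Eventually.of_forall fun y => Real.tanh_eq_sinh_div_cosh y)

lemma tanh_lipschitz' : LipschitzWith 1 Real.tanh := by
  apply lipschitzWith_of_nnnorm_deriv_le (fun x => (hasDerivAt_tanh' x).differentiableAt)
  intro x
  have hd : deriv Real.tanh x = 1 / Real.cosh x ^ 2 := (hasDerivAt_tanh' x).deriv
  rw [← NNReal.coe_le_coe]
  simp only [coe_nnnorm, hd, NNReal.coe_one, Real.norm_eq_abs]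
  rw [abs_of_nonneg (by positivity), div_le_one (by positivity)]
  nlinarith [Real.one_le_cosh x]

lemma tanhVec_lip {n : ℕ} (v w : EuclideanSpace ℝ (Fin n)) :
    ‖tanhVec v - tanhVec w‖ ≤ ‖v - w‖ := by
  rw [EuclideanSpace.norm_eq, EuclideanSpace.norm_eq]
  apply Real.sqrt_le_sqrt
  apply Finset.sum_le_sum
  intro i _
  have h1 : (tanhVec v - tanhVec w) i = Real.tanh (v i) - Real.tanh (w i) := rfl
  have h2 : (v - w) i = v i - w i := rfl
  rw [h1, h2]
  have := tanh_lipschitz'.dist_le_mul (v i) (w i)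
  simp only [Real.dist_eq, NNReal.coe_one, one_mul] at this
  calc ‖Real.tanh (v i) - Real.tanh (w i)‖ ^ 2 = |Real.tanh (v i) - Real.tanh (w i)| ^ 2 := rfl
    _ ≤ |v i - w i| ^ 2 := by apply pow_le_pow_left₀ (abs_nonneg _) this
    _ = ‖v i - w i‖ ^ 2 := rfl

lemma mulVecE_sub {m n : ℕ} (W : Matrix (Fin m) (Fin n) ℝ)
    (a b : EuclideanSpace ℝ (Fin n)) :
    mulVecE W a - mulVecE W b = mulVecE W (a - b) := by
  simp [mulVecE, map_sub]

lemma mulVecE_norm_le {m n : ℕ} (W : Matrix (Fin m) (Fin n) ℝ)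
    (a : EuclideanSpace ℝ (Fin n)) :
    ‖mulVecE W a‖ ≤ opNorm W * ‖a‖ :=
  (LinearMap.toContinuousLinearMap (Matrix.toEuclideanLin W)).le_opNorm a

lemma opNorm_nonneg' {m n : ℕ} (W : Matrix (Fin m) (Fin n) ℝ) : 0 ≤ opNorm W :=
  norm_nonneg _

lemma contraction_tendsto (a b : ℕ → ℝ) (r : ℝ) (hr0 : 0 ≤ r) (hr1 : r < 1)
    (ha : ∀ t, 0 ≤ a t) (hrec : ∀ t, a (t + 1) ≤ r * a t + b (t + 1))
    (hb : Tendsto b atTop (𝓝 0)) :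
    Tendsto a atTop (𝓝 0) := by
  rw [Metric.tendsto_atTop]
  intro ε hε
  have hr1' : 0 < 1 - r := by linarith
  have hε2 : 0 < ε * (1 - r) / 2 := by positivity
  obtain ⟨T, hT⟩ := (Metric.tendsto_atTop.mp hb) (ε * (1 - r) / 2) hε2
  have key : ∀ n, a (T + n) ≤ r ^ n * a T + ε / 2 := by
    intro n
    induction n with
    | zero => simp; nlinarith [ha T]
    | succ n ih =>
      have hb' : b (T + n + 1) ≤ ε * (1 - r) / 2 := by
        have := hT (T + n + 1) (by omega)
        rw [Real.dist_eq, sub_zero] at this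
        exact le_of_lt (lt_of_le_of_lt (le_abs_self _) this)
      have h2 : a (T + (n + 1)) ≤ r * a (T + n) + b (T + n + 1) := by
        have : T + (n + 1) = (T + n) + 1 := by omega
        rw [this]; exact hrec (T + n)
      calc a (T + (n + 1)) ≤ r * a (T + n) + b (T + n + 1) := h2
        _ ≤ r * (r ^ n * a T + ε / 2) + ε * (1 - r) / 2 := by
            apply add_le_add _ hb'
            exact mul_le_mul_of_nonneg_left ih hr0
        _ = r ^ (n + 1) * a T + (r * (ε / 2) + ε * (1 - r) / 2) := by ring
        _ ≤ r ^ (n + 1) * a T + ε / 2 := by nlinarith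
  have hpow : Tendsto (fun n => r ^ n * a T) atTop (𝓝 0) := by
    have := (tendsto_pow_atTop_nhds_zero_of_lt_one hr0 hr1).mul_const (a T)
    simpa using this
  obtain ⟨n₀, hn₀⟩ := (Metric.tendsto_atTop.mp hpow) (ε / 2) (by positivity)
  refine ⟨T + n₀, fun t ht => ?_⟩
  have hsplit : t = T + (t - T) := by omega
  have hkey := key (t - T)
  rw [← hsplit] at hkey
  have hp := hn₀ (t - T) (by omega)
  rw [Real.dist_eq, sub_zero] at hp ⊢
  rw [abs_of_nonneg (ha t)]
  have : r ^ (t - T) * a T ≤ |r ^ (t - T) * a T| := le_abs_self _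
  linarith

/-- Stability condition for the Deep-ESN (Theorem 2), with layers indexed `0, …, K-1`. -/
theorem deep_esn_stability (K : ℕ) (hK : 1 ≤ K) (D : ℕ)
    (N M : ℕ → ℕ)
    (Wres : ∀ i : ℕ, Matrix (Fin (N i)) (Fin (N i)) ℝ)
    (Win0 : Matrix (Fin (N 0)) (Fin D) ℝ)
    (Win : ∀ i : ℕ, Matrix (Fin (N (i + 1))) (Fin (M i)) ℝ)
    (Wenc : ∀ j : ℕ, Matrix (Fin (M j)) (Fin (N j)) ℝ)
    (u : ℕ → EuclideanSpace ℝ (Fin D))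
    (x x' : ∀ i : ℕ, ℕ → EuclideanSpace ℝ (Fin (N i)))
    (hσ : ∀ i, i < K → opNorm (Wres i) < 1)
    (hx0 : ∀ t, x 0 (t + 1) =
      tanhVec (mulVecE (Wres 0) (x 0 t) + mulVecE Win0 (u (t + 1))))
    (hx'0 : ∀ t, x' 0 (t + 1) =
      tanhVec (mulVecE (Wres 0) (x' 0 t) + mulVecE Win0 (u (t + 1))))
    (hxi : ∀ i, i + 1 < K → ∀ t, x (i + 1) (t + 1) =
      tanhVec (mulVecE (Wres (i + 1)) (x (i + 1) t) +
        mulVecE (Win i) (mulVecE (Wenc i) (x i (t + 1)))))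
    (hx'i : ∀ i, i + 1 < K → ∀ t, x' (i + 1) (t + 1) =
      tanhVec (mulVecE (Wres (i + 1)) (x' (i + 1) t) +
        mulVecE (Win i) (mulVecE (Wenc i) (x' i (t + 1))))) :
    ∀ i, i < K → Tendsto (fun t : ℕ => ‖x i t - x' i t‖) atTop (𝓝 0) := by
  intro i
  induction i with
  | zero =>
    intro h0
    apply contraction_tendsto _ (fun _ => 0) (opNorm (Wres 0)) (opNorm_nonneg' _)
      (hσ 0 h0) (fun t => norm_nonneg _) _ tendsto_const_nhds
    intro t
    rw [hx0 t, hx'0 t, add_zero]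
    calc ‖tanhVec (mulVecE (Wres 0) (x 0 t) + mulVecE Win0 (u (t + 1))) -
          tanhVec (mulVecE (Wres 0) (x' 0 t) + mulVecE Win0 (u (t + 1)))‖
        ≤ ‖(mulVecE (Wres 0) (x 0 t) + mulVecE Win0 (u (t + 1))) -
          (mulVecE (Wres 0) (x' 0 t) + mulVecE Win0 (u (t + 1)))‖ := tanhVec_lip _ _
      _ = ‖mulVecE (Wres 0) (x 0 t - x' 0 t)‖ := by
          rw [← mulVecE_sub]; congr 1; abel
      _ ≤ opNorm (Wres 0) * ‖x 0 t - x' 0 t‖ := mulVecE_norm_le _ _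
  | succ i ih =>
    intro h1
    have hi : i < K := by omega
    have hprev := ih hi
    set C := opNorm (Win i) * opNorm (Wenc i) with hC
    apply contraction_tendsto _ (fun t => C * ‖x i t - x' i t‖) (opNorm (Wres (i + 1)))
      (opNorm_nonneg' _) (hσ (i + 1) h1) (fun t => norm_nonneg _)
    · intro t
      rw [hxi i h1 t, hx'i i h1 t]
      calc ‖tanhVec (mulVecE (Wres (i + 1)) (x (i + 1) t) +
              mulVecE (Win i) (mulVecE (Wenc i) (x i (t + 1)))) -
            tanhVec (mulVecE (Wres (i + 1)) (x' (i + 1) t) +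
              mulVecE (Win i) (mulVecE (Wenc i) (x' i (t + 1))))‖
          ≤ ‖(mulVecE (Wres (i + 1)) (x (i + 1) t) +
              mulVecE (Win i) (mulVecE (Wenc i) (x i (t + 1)))) -
            (mulVecE (Wres (i + 1)) (x' (i + 1) t) +
              mulVecE (Win i) (mulVecE (Wenc i) (x' i (t + 1))))‖ := tanhVec_lip _ _
        _ = ‖mulVecE (Wres (i + 1)) (x (i + 1) t - x' (i + 1) t) +
              mulVecE (Win i) (mulVecE (Wenc i) (x i (t + 1)) -
                mulVecE (Wenc i) (x' i (t + 1)))‖ := by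
            rw [← mulVecE_sub (Wres (i+1)), ← mulVecE_sub (Win i)]
            congr 1
            abel
        _ ≤ ‖mulVecE (Wres (i + 1)) (x (i + 1) t - x' (i + 1) t)‖ +
            ‖mulVecE (Win i) (mulVecE (Wenc i) (x i (t + 1)) -
              mulVecE (Wenc i) (x' i (t + 1)))‖ := norm_add_le _ _
        _ ≤ opNorm (Wres (i + 1)) * ‖x (i + 1) t - x' (i + 1) t‖ +
            C * ‖x i (t + 1) - x' i (t + 1)‖ := by
            apply add_le_add (mulVecE_norm_le _ _)
            calc ‖mulVecE (Win i) (mulVecE (Wenc i) (x i (t + 1)) -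
                  mulVecE (Wenc i) (x' i (t + 1)))‖
                ≤ opNorm (Win i) * ‖mulVecE (Wenc i) (x i (t + 1)) -
                  mulVecE (Wenc i) (x' i (t + 1))‖ := mulVecE_norm_le _ _
              _ ≤ opNorm (Win i) * (opNorm (Wenc i) * ‖x i (t + 1) - x' i (t + 1)‖) := by
                  apply mul_le_mul_of_nonneg_left _ (opNorm_nonneg' _)
                  rw [mulVecE_sub]
                  exact mulVecE_norm_le _ _
              _ = C * ‖x i (t + 1) - x' i (t + 1)‖ := by rw [hC]; ring
    · have := hprev.const_mul C
      simpa using this
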